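/- Let D ≥ 1, h > 0, p ≥ 1 an integer, let c, c′ ∈ ℝᴰ, and let M_α ∈ ℝ be given for each multi-index α ∈ ℕᴰ with α[d] < p for all d. Define the re-centered moments M′_γ = Σ_{α ≤ γ componentwise, α[d] < p ∀d} (1/(γ − α)!) M_α ((c − c′)/√(2h²))^{γ−α} for each γ ∈ ℕᴰ. Then for every q ∈ ℝᴰ, the far-field-to-far-field translation identity holds: Σ_{α[d] < p ∀d} M_α h_α((q − c)/√(2h²)) = Σ_{γ ∈ ℕᴰ} M′_γ h_γ((q − c′)/√(2h²)), where the multi-index series on the right converges (the family is summable). -/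

import Mathlib

open Finset

/-- The `n`-th Hermite function: `hₙ(t) = (−1)ⁿ (dⁿ/dtⁿ) e^{−t²}`. -/
noncomputable def hermiteFun (n : ℕ) (t : ℝ) : ℝ :=
  (-1 : ℝ) ^ n * iteratedDeriv n (fun x => Real.exp (-x ^ 2)) t

/-- Multivariate Hermite function `h_α(x) = ∏_{d} h_{α[d]}(x[d])`. -/
noncomputable def hermiteFunMulti {D : ℕ} (α : Fin D → ℕ) (x : Fin D → ℝ) : ℝ :=
  ∏ d, hermiteFun (α d) (x d)

/-- Multi-index factorial `α! = ∏_d (α[d])!`. -/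
def mFactorial {D : ℕ} (α : Fin D → ℕ) : ℕ := ∏ d, Nat.factorial (α d)

/-- Multi-index power `x^α = ∏_d (x[d])^{α[d]}`. -/
def mPow {D : ℕ} (x : Fin D → ℝ) (α : Fin D → ℕ) : ℝ := ∏ d, (x d) ^ (α d)

noncomputable def cGauss : ℂ → ℂ := fun z => Complex.exp (-z ^ 2)

lemma cGauss_diff : Differentiable ℂ cGauss := ((differentiable_pow 2).neg).cexp

lemma iterD_diff (n : ℕ) : Differentiable ℂ (iteratedDeriv n cGauss) := by
  have h : ContDiff ℂ (⊤ : ℕ∞) cGauss := cGauss_diff.contDiff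
  exact (contDiff_iff_iteratedDeriv.mp h).2 n (by exact_mod_cast WithTop.coe_lt_top n)

lemma iterD_add (n k : ℕ) (f : ℂ → ℂ) :
    iteratedDeriv k (iteratedDeriv n f) = iteratedDeriv (n + k) f := by
  induction k with
  | zero => simp
  | succ k ih =>
    rw [iteratedDeriv_succ, ih, ← iteratedDeriv_succ]
    congr 1

lemma iterD_real (n : ℕ) (t : ℝ) :
    iteratedDeriv n cGauss t =
      ((iteratedDeriv n (fun x : ℝ => Real.exp (-x ^ 2)) t : ℝ) : ℂ) := by
  induction n generalizing t with
  | zero =>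
    simp only [iteratedDeriv_zero, cGauss, Complex.ofReal_exp]
    norm_cast
  | succ n ih =>
    set g := iteratedDeriv n (fun x : ℝ => Real.exp (-x ^ 2)) with hg
    set d := deriv (iteratedDeriv n cGauss) (t : ℂ) with hd
    have hdd : HasDerivAt (iteratedDeriv n cGauss) d (t : ℝ) :=
      ((iterD_diff n) (t : ℂ)).hasDerivAt
    have h2 : HasDerivAt g d.re t := by
      have := hdd.real_of_complex
      refine this.congr_of_eventuallyEq ?_
      filter_upwards with x
      rw [ih x]; simp
    have h3 : HasDerivAt (fun y : ℝ => ((g y : ℝ) : ℂ)) ((d.re : ℝ) : ℂ) t :=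
      h2.ofReal_comp
    have h1 : HasDerivAt (fun y : ℝ => ((g y : ℝ) : ℂ)) d t := by
      have := hdd.comp_ofReal
      refine this.congr_of_eventuallyEq ?_
      filter_upwards with x
      rw [ih x]
    have hre : d = ((d.re : ℝ) : ℂ) := h1.unique h3
    rw [iteratedDeriv_succ, iteratedDeriv_succ, ← hd, hre, h2.deriv]

/-- 1D Hermite translation Taylor series. -/
lemma hermite_hasSum (n : ℕ) (y a : ℝ) :
    HasSum (fun k : ℕ => a ^ k / (Nat.factorial k : ℝ) * hermiteFun (n + k) y)
      (hermiteFun n (y - a)) := by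
  have hC := Complex.hasSum_taylorSeries_of_entire (iterD_diff n) (y : ℂ) ((y - a : ℝ) : ℂ)
  have hC2 := (hC.mul_left ((-1 : ℂ) ^ n)).mapL Complex.reCLM
  have hfun : (fun k : ℕ => Complex.reCLM ((-1 : ℂ) ^ n *
        ((k.factorial : ℂ)⁻¹ • (((y - a : ℝ) : ℂ) - (y : ℂ)) ^ k •
          iteratedDeriv k (iteratedDeriv n cGauss) (y : ℂ))))
      = fun k : ℕ => a ^ k / (Nat.factorial k : ℝ) * hermiteFun (n + k) y := by
    funext k
    rw [iterD_add, iterD_real]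
    have : (((y - a : ℝ) : ℂ) - (y : ℂ)) = ((-a : ℝ) : ℂ) := by push_cast; ring
    rw [this]
    simp only [smul_eq_mul]
    push_cast
    rw [show ((-1 : ℂ)) ^ n * (((k.factorial : ℂ))⁻¹ * ((-(a : ℂ)) ^ k *
        ((iteratedDeriv (n + k) (fun x : ℝ => Real.exp (-x ^ 2)) y : ℝ) : ℂ)))
      = (((( -1 : ℝ) ^ n * (((k.factorial : ℝ))⁻¹ * ((-a) ^ k *
          iteratedDeriv (n + k) (fun x : ℝ => Real.exp (-x ^ 2)) y))) : ℝ) : ℂ) by push_cast; ring]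
    rw [Complex.reCLM_apply, Complex.ofReal_re, hermiteFun]
    have hk : (k.factorial : ℝ) ≠ 0 := by positivity
    rw [neg_pow a k, pow_add]
    field_simp
  have hval : Complex.reCLM ((-1 : ℂ) ^ n * iteratedDeriv n cGauss ((y - a : ℝ) : ℂ))
      = hermiteFun n (y - a) := by
    rw [iterD_real, hermiteFun]
    rw [show ((-1 : ℂ) ^ n * ((iteratedDeriv n (fun x : ℝ => Real.exp (-x ^ 2)) (y - a) : ℝ) : ℂ))
      = ((((-1 : ℝ) ^ n * iteratedDeriv n (fun x : ℝ => Real.exp (-x ^ 2)) (y - a)) : ℝ) : ℂ) by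
        push_cast; ring]
    rw [Complex.reCLM_apply, Complex.ofReal_re]
  rw [hfun, hval] at hC2
  exact hC2


lemma hasSum_mul_pair {ι κ : Type*} {g : ι → ℝ} {G : κ → ℝ} {s t : ℝ}
    (h0 : HasSum g s) (hrest : HasSum G t) :
    HasSum (fun p : ι × κ => g p.1 * G p.2) (s * t) := by
  have hsumm : Summable (fun p : ι × κ => g p.1 * G p.2) :=
    summable_mul_of_summable_norm (summable_norm_iff.mpr h0.summable)
      (summable_norm_iff.mpr hrest.summable)
  exact h0.mul hrest hsumm

/-- Finite product of `HasSum`s over a pi type. -/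
lemma hasSum_pi_prod : ∀ {D : ℕ} (f : Fin D → ℕ → ℝ) (a : Fin D → ℝ),
    (∀ d, HasSum (f d) (a d)) →
    HasSum (fun γ : Fin D → ℕ => ∏ d, f d (γ d)) (∏ d, a d) := by
  intro D
  induction D with
  | zero =>
    intro f a _
    have : HasSum (fun γ : Fin 0 → ℕ => ∏ d, f d (γ d)) (∏ d, f d ((default : Fin 0 → ℕ) d)) :=
      hasSum_single default (by
        intro b hb
        exact absurd (Subsingleton.elim b default) hb)
    simpa using this
  | succ D ih =>
    intro f a h
    have h0 := h 0
    have hrest := ih (fun d : Fin D => f d.succ) (fun d : Fin D => a d.succ) (fun d : Fin D => h d.succ)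
    have hmul : HasSum (fun p : ℕ × (Fin D → ℕ) => f 0 p.1 * ∏ d : Fin D, f d.succ (p.2 d))
        (a 0 * ∏ d : Fin D, a d.succ) := by
      exact hasSum_mul_pair (g := f 0) (G := fun κ : Fin D → ℕ => ∏ d : Fin D, f d.succ (κ d)) h0 hrest
    rw [Fin.prod_univ_succ]
    refine ((Fin.consEquiv (fun _ : Fin (D + 1) => ℕ)).hasSum_iff).mp ?_
    have : ((fun γ : Fin (D + 1) → ℕ => ∏ d, f d (γ d)) ∘ (Fin.consEquiv fun _ => ℕ))
        = fun p : ℕ × (Fin D → ℕ) => f 0 p.1 * ∏ d : Fin D, f d.succ (p.2 d) := by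
      funext p
      simp [Fin.consEquiv, Fin.prod_univ_succ]
    rw [this]
    exact hmul

/-- Far-field–to–far-field (F2F) translation operator for the Gaussian kernel:
given far-field coefficients `M_α` (for `α[d] < p`) centered at `c`, the
re-centered moments
`M′_γ = Σ_{α ≤ γ, α < p} (1/(γ−α)!) M_α ((c − c′)/√(2h²))^{γ−α}` satisfy
`Σ_{α < p} M_α h_α((q − c)/√(2h²)) = Σ_{γ ∈ ℕᴰ} M′_γ h_γ((q − c′)/√(2h²))`,
the right-hand family being summable. -/
theorem farfield_to_farfield_translation (D : ℕ) (hD : 1 ≤ D) (h : ℝ) (hh : 0 < h)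
    (p : ℕ) (hp : 1 ≤ p) (c c' : Fin D → ℝ)
    (M : (Fin D → Fin p) → ℝ)
    (M' : (Fin D → ℕ) → ℝ)
    (hM' : ∀ γ : Fin D → ℕ, M' γ =
      ∑ α : Fin D → Fin p,
        if ∀ d, (α d : ℕ) ≤ γ d then
          (1 / (mFactorial (fun d => γ d - (α d : ℕ)) : ℝ)) * M α *
            mPow (fun d => (c d - c' d) / Real.sqrt (2 * h ^ 2))
              (fun d => γ d - (α d : ℕ))
        else 0)
    (q : Fin D → ℝ) :
    HasSum
      (fun γ : Fin D → ℕ =>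
        M' γ * hermiteFunMulti γ (fun d => (q d - c' d) / Real.sqrt (2 * h ^ 2)))
      (∑ α : Fin D → Fin p, M α *
        hermiteFunMulti (fun d => (α d : ℕ))
          (fun d => (q d - c d) / Real.sqrt (2 * h ^ 2))) := by
  set s : ℝ := Real.sqrt (2 * h ^ 2) with hs
  set y : Fin D → ℝ := fun d => (q d - c' d) / s with hy
  set x : Fin D → ℝ := fun d => (q d - c d) / s with hx
  set A : Fin D → ℝ := fun d => (c d - c' d) / s with hA
  have hyx : ∀ d, y d - A d = x d := by
    intro d
    simp only [hy, hA, hx]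
    ring
  have hstep : ∀ α : Fin D → Fin p,
      HasSum (fun γ : Fin D → ℕ =>
        (if ∀ d, (α d : ℕ) ≤ γ d then
          (1 / (mFactorial (fun d => γ d - (α d : ℕ)) : ℝ)) * M α *
            mPow A (fun d => γ d - (α d : ℕ)) else 0) * hermiteFunMulti γ y)
        (M α * hermiteFunMulti (fun d => (α d : ℕ)) x) := by
    intro α
    have h1 : ∀ d, HasSum (fun k : ℕ => A d ^ k / (Nat.factorial k : ℝ) *
        hermiteFun ((α d : ℕ) + k) (y d)) (hermiteFun (α d) (x d)) := by
      intro d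
      have h0 := hermite_hasSum (α d) (y d) (A d)
      rwa [hyx d] at h0
    have h2 := (hasSum_pi_prod
      (fun d k => A d ^ k / (Nat.factorial k : ℝ) * hermiteFun ((α d : ℕ) + k) (y d))
      (fun d => hermiteFun (α d) (x d)) h1).mul_left (M α)
    have hinj : Function.Injective
        (fun κ : Fin D → ℕ => (fun d => (α d : ℕ) + κ d : Fin D → ℕ)) := by
      intro κ₁ κ₂ hk
      funext d
      have hkd := congrFun hk d
      simp only at hkd
      omega
    rw [← hinj.hasSum_iff ?_]
    · have hcomp : ((fun γ : Fin D → ℕ =>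
          (if ∀ d, (α d : ℕ) ≤ γ d then
            (1 / (mFactorial (fun d => γ d - (α d : ℕ)) : ℝ)) * M α *
              mPow A (fun d => γ d - (α d : ℕ)) else 0) * hermiteFunMulti γ y)
          ∘ (fun κ : Fin D → ℕ => (fun d => (α d : ℕ) + κ d : Fin D → ℕ)))
          = fun κ : Fin D → ℕ => M α * ∏ d,
              (A d ^ κ d / (Nat.factorial (κ d) : ℝ) * hermiteFun ((α d : ℕ) + κ d) (y d)) := by
        funext κ
        simp only [Function.comp_apply]
        rw [if_pos (fun d => Nat.le_add_right _ _)]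
        simp only [Nat.add_sub_cancel_left, mFactorial, mPow, hermiteFunMulti, Nat.cast_prod]
        rw [Finset.prod_mul_distrib, Finset.prod_div_distrib]
        ring
      rw [hcomp]
      convert h2 using 2
      · rfl
      · simp [hermiteFunMulti]
    · intro γ hγ
      rw [if_neg, zero_mul]
      intro hle
      exact hγ ⟨fun d => γ d - (α d : ℕ), by funext d; have := hle d; simp only; omega⟩
  have hsum := hasSum_sum (s := (Finset.univ : Finset (Fin D → Fin p)))
    (f := fun (α : Fin D → Fin p) (γ : Fin D → ℕ) =>
      (if ∀ d, (α d : ℕ) ≤ γ d then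
        (1 / (mFactorial (fun d => γ d - (α d : ℕ)) : ℝ)) * M α *
          mPow A (fun d => γ d - (α d : ℕ)) else 0) * hermiteFunMulti γ y)
    (fun α _ => hstep α)
  have hfin : (fun γ : Fin D → ℕ => ∑ α : Fin D → Fin p,
      (if ∀ d, (α d : ℕ) ≤ γ d then
        (1 / (mFactorial (fun d => γ d - (α d : ℕ)) : ℝ)) * M α *
          mPow A (fun d => γ d - (α d : ℕ)) else 0) * hermiteFunMulti γ y)
      = fun γ : Fin D → ℕ => M' γ * hermiteFunMulti γ y := by
    funext γ
    rw [hM' γ, Finset.sum_mul]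
  rw [hfin] at hsum
  exact hsum
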